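/- The binary reflected Gray code γ^g_n is exactly 1-preserving: γ^g_n is 1-preserving, and for n ≥ 2 it is not 2-preserving. -/

import Mathlib

/-- Resolution of a ternary word (`none` is the metastable value `M`). -/
def res {n : ℕ} (x : Fin n → Option Bool) : Set (Fin n → Bool) :=
  {y | ∀ j : Fin n, ∀ b : Bool, x j = some b → y j = b}

open Classical in
/-- Extended codeword: pointwise superposition of all codewords `γ a`, `a ∈ I`. -/
noncomputable def extCW {M n : ℕ} (γ : Fin M → Fin n → Bool) (I : Set (Fin M)) :
    Fin n → Option Bool :=
  fun j =>
    if ∀ a ∈ I, γ a j = true then some true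
    else if ∀ a ∈ I, γ a j = false then some false
    else none

/-- The interval `⟨i, i+p⟩ = {i, ..., i+p}` inside `{0, ..., M-1}`. -/
def intvl (M i p : ℕ) : Set (Fin M) := {a : Fin M | i ≤ a.val ∧ a.val ≤ i + p}

/-- A code is `k`-preserving if for every interval `⟨i,i+p⟩` with `p ≤ k`,
the codewords in the resolution of the extended codeword are exactly the
codewords of the interval. -/
def Preserving {M n : ℕ} (γ : Fin M → Fin n → Bool) (k : ℕ) : Prop :=
  ∀ i p : ℕ, p ≤ k → i + p < M →
    Set.range γ ∩ res (extCW γ (intvl M i p)) = γ '' (intvl M i p)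

/-- The binary reflected Gray code, position `0` is the most significant bit. -/
def brgc : (n : ℕ) → Fin (2^n) → Fin n → Bool
  | 0 => fun _ => fun i => i.elim0
  | n+1 => fun i =>
      if h : i.val < 2^n then Fin.cons false (brgc n ⟨i.val, h⟩)
      else Fin.cons true (brgc n ⟨2^(n+1) - i.val - 1, by
        have h1 := i.isLt
        have h2 : (2:ℕ)^(n+1) = 2^n * 2 := pow_succ 2 n
        omega⟩)


lemma brgc_injective : ∀ n, Function.Injective (brgc n) := by
  intro n
  induction n with
  | zero => intro a b _; exact Fin.ext (by omega)
  | succ n ih =>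
    intro a b hab
    unfold brgc at hab
    by_cases ha : a.val < 2^n <;> by_cases hb : b.val < 2^n <;>
      simp only [ha, hb, dif_pos, dif_neg, not_lt, not_false_iff] at hab <;>
      obtain ⟨h1, h2⟩ := Fin.cons_injective2 hab
    · have := ih h2
      simp only [Fin.mk.injEq] at this
      exact Fin.ext this
    · exact absurd h1 (by simp)
    · exact absurd h1 (by simp)
    · have := ih h2
      simp only [Fin.mk.injEq] at this
      have ha' := a.isLt; have hb' := b.isLt
      exact Fin.ext (by omega)


lemma cons_ne_succ {n : ℕ} {a b : Bool} {f g : Fin n → Bool} {j : Fin (n+1)}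
    (h : (Fin.cons a f : Fin (n+1) → Bool) j ≠ (Fin.cons b g : Fin (n+1) → Bool) j) (hab : a = b) :
    ∃ k : Fin n, j = k.succ ∧ f k ≠ g k := by
  subst hab
  cases j using Fin.cases with
  | zero => simp at h
  | succ k => exact ⟨k, rfl, by simpa using h⟩

lemma brgc_gray : ∀ n (i : ℕ) (h : i + 1 < 2^n) (j j' : Fin n),
    brgc n ⟨i, Nat.lt_of_succ_lt h⟩ j ≠ brgc n ⟨i+1, h⟩ j →
    brgc n ⟨i, Nat.lt_of_succ_lt h⟩ j' ≠ brgc n ⟨i+1, h⟩ j' → j = j' := by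
  intro n
  induction n with
  | zero => intro i h; simp at h
  | succ n ih =>
    intro i h j j' hj hj'
    rcases lt_trichotomy (i+1) (2^n) with hc | hc | hc
    · -- both in first half
      have hi : i < 2^n := by omega
      unfold brgc at hj hj'
      simp only [hi, hc, dif_pos] at hj hj'
      obtain ⟨k, rfl, hk⟩ := cons_ne_succ hj rfl
      obtain ⟨k', rfl, hk'⟩ := cons_ne_succ hj' rfl
      exact congrArg Fin.succ (ih i hc k k' hk hk')
    · -- i+1 = 2^n : tails are equal, only position 0 differs
      have hi : i < 2^n := by omega
      have hi1 : ¬ (i+1 < 2^n) := by omega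
      have hp : (2:ℕ)^(n+1) = 2^n*2 := pow_succ 2 n
      unfold brgc at hj hj'
      simp only [hi, hi1, dif_pos, dif_neg, not_false_iff] at hj hj'
      have he : (⟨2^(n+1) - (i+1) - 1, by omega⟩ : Fin (2^n)) = ⟨i, hi⟩ :=
        Fin.ext (by simp only [Fin.val_mk]; omega)
      rw [he] at hj hj'
      have key : ∀ (jj : Fin (n+1)),
          (Fin.cons false (brgc n ⟨i, hi⟩) : Fin (n+1) → Bool) jj ≠
            (Fin.cons true (brgc n ⟨i, hi⟩) : Fin (n+1) → Bool) jj → jj = 0 := by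
        intro jj hjj
        cases jj using Fin.cases with
        | zero => rfl
        | succ k => simp only [Fin.cons_succ] at hjj; exact absurd rfl hjj
      rw [key j hj, key j' hj']
    · -- both in second half
      have hp : (2:ℕ)^(n+1) = 2^n*2 := pow_succ 2 n
      have hi : ¬ (i < 2^n) := by omega
      have hi1 : ¬ (i+1 < 2^n) := by omega
      unfold brgc at hj hj'
      simp only [hi, hi1, dif_neg, not_false_iff] at hj hj'
      have hm1 : (2^(n+1) - (i+1) - 1) + 1 < 2^n := by omega
      have he : (⟨2^(n+1) - i - 1, by omega⟩ : Fin (2^n)) = ⟨(2^(n+1) - (i+1) - 1) + 1, hm1⟩ :=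
        Fin.ext (by simp only [Fin.val_mk]; omega)
      rw [he] at hj hj'
      obtain ⟨k, rfl, hk⟩ := cons_ne_succ hj rfl
      obtain ⟨k', rfl, hk'⟩ := cons_ne_succ hj' rfl
      exact congrArg Fin.succ (ih (2^(n+1) - (i+1) - 1) hm1 k k' (Ne.symm hk) (Ne.symm hk'))

lemma brgc_small : ∀ n, 2 ≤ n → ∀ (a : Fin (2^n)), a.val ≤ 3 → ∀ j : Fin n,
    brgc n a j = if j.val + 2 < n then false
      else if j.val + 2 = n then decide (2 ≤ a.val)
      else decide (a.val = 1 ∨ a.val = 2) := by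
  intro n
  induction n with
  | zero => omega
  | succ n ih =>
    intro hn a ha j
    rcases Nat.lt_or_ge n 2 with h2 | h2
    · -- n + 1 = 2
      interval_cases n
      · omega
      · fin_cases a <;> fin_cases j <;> decide
    · have h4 : a.val < 2^n := by
        have : 2^2 ≤ 2^n := Nat.pow_le_pow_right (by norm_num) h2
        omega
      unfold brgc
      simp only [h4, dif_pos]
      cases j using Fin.cases with
      | zero =>
        simp only [Fin.cons_zero, Fin.val_zero]
        simp [show (0:ℕ) + 2 < n + 1 by omega]
      | succ k =>
        simp only [Fin.cons_succ, Fin.val_succ]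
        rw [ih h2 ⟨a.val, h4⟩ ha k]
        simp only [Fin.val_mk]
        split_ifs <;> first | rfl | omega

lemma extCW_eq_some {M n : ℕ} (γ : Fin M → Fin n → Bool) {I : Set (Fin M)}
    {a : Fin M} (ha : a ∈ I) (j : Fin n) (b : Bool)
    (hb : ∀ x ∈ I, γ x j = b) : extCW γ I j = some b := by
  unfold extCW
  cases b with
  | true => rw [if_pos hb]
  | false =>
    rw [if_neg, if_pos hb]
    intro h
    have := h a ha; have := hb a ha; simp_all

lemma extCW_some_imp {M n : ℕ} (γ : Fin M → Fin n → Bool) (I : Set (Fin M))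
    (j : Fin n) (b : Bool) (h : extCW γ I j = some b) : ∀ x ∈ I, γ x j = b := by
  unfold extCW at h
  split_ifs at h with h1 h2 <;> simp_all


/-- The binary reflected Gray code is exactly `1`-preserving: it is
`1`-preserving, and for `n ≥ 2` it is not `2`-preserving. -/
theorem brgc_exactly_one_preserving (n : ℕ) :
    Preserving (brgc n) 1 ∧ (2 ≤ n → ¬ Preserving (brgc n) 2) := by
  constructor
  · intro i p hp hip
    interval_cases p
    · -- p = 0 : singleton interval
      have hi : i < 2^n := by omega
      have hI : intvl (2^n) i 0 = {(⟨i, hi⟩ : Fin (2^n))} := by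
        ext x
        simp only [intvl, Set.mem_setOf_eq, Set.mem_singleton_iff, Fin.ext_iff, Fin.val_mk]
        omega
      rw [hI]
      ext y
      simp only [Set.mem_inter_iff, Set.mem_range, res, Set.mem_setOf_eq, Set.image_singleton,
        Set.mem_singleton_iff]
      constructor
      · rintro ⟨-, hres⟩
        funext j
        exact hres j _ (extCW_eq_some (brgc n) (Set.mem_singleton _) j _ (by rintro x rfl; rfl))
      · rintro rfl
        exact ⟨⟨_, rfl⟩, fun j b hb => extCW_some_imp _ _ j b hb _ rfl⟩
    · -- p = 1 : pair interval
      have hi1 : i + 1 < 2^n := hip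
      have hI : intvl (2^n) i 1 =
          {(⟨i, Nat.lt_of_succ_lt hi1⟩ : Fin (2^n)), ⟨i+1, hi1⟩} := by
        ext x
        simp only [intvl, Set.mem_setOf_eq, Set.mem_insert_iff, Set.mem_singleton_iff,
          Fin.ext_iff, Fin.val_mk]
        omega
      rw [hI]
      have haI : (⟨i, Nat.lt_of_succ_lt hi1⟩ : Fin (2^n)) ∈
          ({⟨i, Nat.lt_of_succ_lt hi1⟩, ⟨i+1, hi1⟩} : Set (Fin (2^n))) := Or.inl rfl
      have ha'I : (⟨i+1, hi1⟩ : Fin (2^n)) ∈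
          ({⟨i, Nat.lt_of_succ_lt hi1⟩, ⟨i+1, hi1⟩} : Set (Fin (2^n))) := Or.inr rfl
      ext y
      simp only [Set.mem_inter_iff, Set.mem_range, res, Set.mem_setOf_eq, Set.image_pair,
        Set.mem_insert_iff, Set.mem_singleton_iff]
      constructor
      · rintro ⟨-, hres⟩
        have key : ∀ j : Fin n, brgc n ⟨i, Nat.lt_of_succ_lt hi1⟩ j = brgc n ⟨i+1, hi1⟩ j →
            y j = brgc n ⟨i, Nat.lt_of_succ_lt hi1⟩ j := by
          intro j hj
          exact hres j _ (extCW_eq_some (brgc n) haI j _ (by rintro x (rfl | rfl); rfl; exact hj.symm))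
        by_cases hya : y = brgc n ⟨i, Nat.lt_of_succ_lt hi1⟩
        · exact Or.inl hya
        · refine Or.inr ?_
          have hex : ∃ j0, y j0 ≠ brgc n ⟨i, Nat.lt_of_succ_lt hi1⟩ j0 := by
            by_contra hco
            push_neg at hco
            exact hya (funext fun j => by simpa using hco j)
          obtain ⟨j0, hj0⟩ := hex
          have hd0 : brgc n ⟨i, Nat.lt_of_succ_lt hi1⟩ j0 ≠ brgc n ⟨i+1, hi1⟩ j0 :=
            fun he => hj0 (key j0 he)
          funext j
          by_cases hj : brgc n ⟨i, Nat.lt_of_succ_lt hi1⟩ j = brgc n ⟨i+1, hi1⟩ j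
          · rw [← hj]; exact key j hj
          · have hjj0 : j = j0 := brgc_gray n i hi1 j j0 hj hd0
            subst hjj0
            cases hyy : y j <;> cases h1 : brgc n ⟨i, Nat.lt_of_succ_lt hi1⟩ j <;>
              cases h2 : brgc n ⟨i+1, hi1⟩ j <;> simp_all
      · rintro (rfl | rfl)
        · exact ⟨⟨_, rfl⟩, fun j b hb => extCW_some_imp _ _ j b hb _ haI⟩
        · exact ⟨⟨_, rfl⟩, fun j b hb => extCW_some_imp _ _ j b hb _ ha'I⟩
  · intro hn hP
    have h4 : 4 ≤ 2^n := by
      calc (4:ℕ) = 2^2 := rfl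
      _ ≤ 2^n := Nat.pow_le_pow_right (by norm_num) hn
    have heq := hP 0 2 le_rfl (by omega)
    have h3 : (brgc n ⟨3, by omega⟩) ∈
        Set.range (brgc n) ∩ res (extCW (brgc n) (intvl (2^n) 0 2)) := by
      refine ⟨⟨_, rfl⟩, ?_⟩
      intro j b hb
      have h0 := extCW_some_imp _ _ j b hb ⟨0, by omega⟩ (by simp [intvl])
      have h1 := extCW_some_imp _ _ j b hb ⟨1, by omega⟩ (by simp [intvl])
      have h2 := extCW_some_imp _ _ j b hb ⟨2, by omega⟩ (by simp [intvl])
      rw [brgc_small n hn _ (by norm_num) j]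
      rw [brgc_small n hn _ (by norm_num) j] at h0 h1 h2
      simp only [Fin.val_mk] at h0 h1 h2 ⊢
      split_ifs at h0 h1 h2 ⊢ <;> simp_all
    rw [heq] at h3
    obtain ⟨x, hx, hx3⟩ := h3
    have hxe := brgc_injective n hx3
    subst hxe
    simp only [intvl, Set.mem_setOf_eq, Fin.val_mk] at hx
    omega
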